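/- For fixed z > 0, as |ν| → ∞ in a sector with Re ν ≥ 0, the logarithmic derivative of the modified Bessel function of the first kind satisfies I'_ν(z)/I_ν(z) = ν/z + z/(2ν) + O(1/|ν|²). -/

import Mathlib

open Filter Asymptotics Complex Finset

/-- The modified Bessel function of the first kind. -/
noncomputable def besselI (ν : ℂ) (z : ℝ) : ℂ :=
  ∑' k : ℕ, ((z : ℂ) / 2) ^ (ν + 2 * (k : ℂ)) /
    ((k.factorial : ℂ) * Complex.Gamma (ν + k + 1))

/-- Derivative of `I_ν` in the argument `z`. -/
noncomputable def besselI' (ν : ℂ) (z : ℝ) : ℂ := deriv (fun t : ℝ => besselI ν t) z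

noncomputable def Complex.abs : AbsoluteValue ℂ ℝ where
  toFun := fun z => ‖z‖
  map_mul' := norm_mul
  nonneg' := norm_nonneg
  eq_zero' := fun _ => norm_eq_zero
  add_le' := norm_add_le

lemma Complex.norm_eq_abs (z : ℂ) : ‖z‖ = Complex.abs z := rfl

lemma Complex.abs_apply (z : ℂ) : Complex.abs z = Real.sqrt (Complex.normSq z) :=
  Complex.norm_def z

lemma Complex.re_le_abs (z : ℂ) : z.re ≤ Complex.abs z := Complex.re_le_norm z

@[simp] lemma Complex.abs_ofReal (r : ℝ) : Complex.abs r = |r| := Complex.norm_real r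

@[simp] lemma Complex.abs_natCast (n : ℕ) : Complex.abs n = n := Complex.norm_natCast n

lemma Complex.abs_cpow_eq_rpow_re_of_pos {x : ℝ} (hx : 0 < x) (y : ℂ) :
    Complex.abs ((x : ℂ) ^ y) = x ^ y.re := Complex.norm_cpow_eq_rpow_re_of_pos hx y

@[simp] lemma Complex.abs_ofNat (n : ℕ) [n.AtLeastTwo] :
    Complex.abs (OfNat.ofNat n : ℂ) = OfNat.ofNat n :=
  show ‖(OfNat.ofNat n : ℂ)‖ = _ from by simp

@[simp] lemma Complex.abs_two : Complex.abs 2 = 2 := show ‖(2:ℂ)‖ = 2 from by norm_num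

@[simp] lemma Complex.abs_four : Complex.abs 4 = 4 := show ‖(4:ℂ)‖ = 4 from by norm_num

namespace BesselAsymp

noncomputable def Pprod (ν : ℂ) (k : ℕ) : ℂ := ∏ j ∈ Finset.range k, (ν + j + 1)

lemma Pprod_zero (ν : ℂ) : Pprod ν 0 = 1 := by simp [Pprod]

lemma Pprod_one (ν : ℂ) : Pprod ν 1 = ν + 1 := by simp [Pprod]

lemma Gamma_factor (ν : ℂ) (hν : 0 ≤ ν.re) (k : ℕ) :
    Complex.Gamma (ν + k + 1) = Complex.Gamma (ν + 1) * Pprod ν k := by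
  induction k with
  | zero => simp [Pprod]
  | succ k ih =>
    have hne : ν + k + 1 ≠ 0 := by
      intro h
      have := congrArg Complex.re h
      simp at this
      nlinarith [this]
    have : Complex.Gamma (ν + (k+1) + 1) = (ν + k + 1) * Complex.Gamma (ν + k + 1) := by
      have := Complex.Gamma_add_one (ν + k + 1) hne
      rw [← this]; ring_nf
    rw [show ((k+1:ℕ):ℂ) = (k:ℂ)+1 from by push_cast; ring, this, ih]
    simp only [Pprod, Finset.prod_range_succ]
    ring

lemma abs_le_abs_add (ν : ℂ) (hν : 0 ≤ ν.re) (j : ℕ) :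
    Complex.abs ν ≤ Complex.abs (ν + j + 1) := by
  have h1 : Complex.abs ν = Real.sqrt (ν.re^2 + ν.im^2) := by
    rw [Complex.abs_apply, Complex.normSq_apply]; ring_nf
  have h2 : Complex.abs (ν + j + 1) = Real.sqrt ((ν.re + j + 1)^2 + ν.im^2) := by
    rw [Complex.abs_apply, Complex.normSq_apply]; simp; ring_nf
  rw [h1, h2]
  apply Real.sqrt_le_sqrt
  nlinarith [Nat.cast_nonneg (α := ℝ) j]

lemma nat_le_abs_add (ν : ℂ) (hν : 0 ≤ ν.re) (j : ℕ) :
    (j + 1 : ℝ) ≤ Complex.abs (ν + j + 1) := by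
  have : (ν + j + 1).re ≤ Complex.abs (ν + j + 1) := Complex.re_le_abs _
  simp at this
  linarith

lemma abs_pow_le_Pprod (ν : ℂ) (hν : 0 ≤ ν.re) (k : ℕ) :
    Complex.abs ν ^ k ≤ Complex.abs (Pprod ν k) := by
  rw [Pprod, map_prod]
  rw [show Complex.abs ν ^ k = ∏ _j ∈ Finset.range k, Complex.abs ν by
    rw [Finset.prod_const, Finset.card_range]]
  exact Finset.prod_le_prod (fun _ _ => (Complex.abs.nonneg _)) fun j _ => abs_le_abs_add ν hν j

lemma factorial_le_Pprod (ν : ℂ) (hν : 0 ≤ ν.re) (k : ℕ) :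
    (k.factorial : ℝ) ≤ Complex.abs (Pprod ν k) := by
  rw [Pprod, map_prod]
  calc (k.factorial : ℝ) = ∏ j ∈ Finset.range k, ((j : ℝ) + 1) := by
        rw [← Finset.prod_range_add_one_eq_factorial k]; push_cast; ring
    _ ≤ _ := Finset.prod_le_prod (fun j _ => by positivity) fun j _ => nat_le_abs_add ν hν j

lemma Pprod_ne_zero (ν : ℂ) (hν : 0 ≤ ν.re) (k : ℕ) : Pprod ν k ≠ 0 := by
  rw [Pprod]
  apply Finset.prod_ne_zero_iff.2
  intro j _
  intro h
  have := congrArg Complex.re h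
  simp at this
  nlinarith [this]

lemma Gamma_ne_zero' (ν : ℂ) (hν : 0 ≤ ν.re) : Complex.Gamma (ν + 1) ≠ 0 := by
  apply Complex.Gamma_ne_zero
  intro m h
  have := congrArg Complex.re h
  simp at this
  nlinarith [Nat.cast_nonneg (α := ℝ) m]



lemma factorial_G_le (ν : ℂ) (hν : 0 ≤ ν.re) (k : ℕ)
    (hP : (k.factorial : ℝ) ≤ Complex.abs (Pprod ν k))
    (hGam : Complex.Gamma (ν + k + 1) = Complex.Gamma (ν + 1) * Pprod ν k) :
    (k.factorial : ℝ) * Complex.abs (Complex.Gamma (ν + 1)) * k.factorial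
      ≤ Complex.abs ((k.factorial : ℂ) * Complex.Gamma (ν + k + 1)) := by
  rw [map_mul, hGam, map_mul]
  have h1 : Complex.abs ((k.factorial : ℂ)) = (k.factorial : ℝ) := by
    simp [Complex.abs_natCast]
  rw [h1]
  have hG : 0 ≤ Complex.abs (Complex.Gamma (ν + 1)) := Complex.abs.nonneg _
  have h0 : (0:ℝ) ≤ (k.factorial : ℝ) := by positivity
  nlinarith [mul_nonneg (mul_nonneg h0 hG) (sub_nonneg.2 hP)]

lemma besselI'_eq (z : ℝ) (hz : 0 < z) (ν : ℂ) (hν : 0 ≤ ν.re) :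
    besselI' ν z = ∑' k : ℕ, (ν + 2 * (k : ℂ)) * ((z : ℂ) / 2) ^ (ν + 2 * (k : ℂ)) /
      ((k.factorial : ℂ) * Complex.Gamma (ν + k + 1)) / (z : ℂ) := by
  classical
  set M : ℝ := max ((z + 1) / 2) 1 with hM
  have hM1 : 1 ≤ M := le_max_right _ _
  have hM0 : 0 < M := lt_of_lt_of_le one_pos hM1
  set G : ℝ := Complex.abs (Complex.Gamma (ν + 1)) with hG
  have hGpos : 0 < G := by
    rw [hG]
    exact Complex.abs.pos (Gamma_ne_zero' ν hν)
  set g : ℕ → ℝ → ℂ := fun k t => ((t : ℂ) / 2) ^ (ν + 2 * (k : ℂ)) /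
      ((k.factorial : ℂ) * Complex.Gamma (ν + k + 1)) with hgdef
  set g' : ℕ → ℝ → ℂ := fun k t => (ν + 2 * (k : ℂ)) * ((t : ℂ) / 2) ^ (ν + 2 * (k : ℂ)) /
      ((k.factorial : ℂ) * Complex.Gamma (ν + k + 1)) / (t : ℂ) with hg'def
  set u : ℕ → ℝ := fun k => (Complex.abs ν + 2 * k) * M ^ ν.re * (M ^ 2) ^ k /
      ((z / 2) * ((k.factorial : ℝ) * G * k.factorial)) with hudef
  have habs_pow : ∀ (k : ℕ) (t : ℝ), 0 < t →
      Complex.abs (((t : ℂ) / 2) ^ (ν + 2 * (k : ℂ))) = (t / 2) ^ (ν.re + 2 * (k : ℝ)) := by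
    intro k t ht
    have h : ((t : ℂ) / 2) = (((t / 2 : ℝ)) : ℂ) := by push_cast; ring
    rw [h, Complex.abs_cpow_eq_rpow_re_of_pos (by positivity)]
    norm_num
  have hpow_le : ∀ (k : ℕ) (t : ℝ), 0 < t → t / 2 ≤ M →
      (t / 2) ^ (ν.re + 2 * (k : ℝ)) ≤ M ^ ν.re * (M ^ 2) ^ k := by
    intro k t ht htM
    have h1 : (t / 2) ^ (ν.re + 2 * (k : ℝ)) ≤ M ^ (ν.re + 2 * (k : ℝ)) :=
      Real.rpow_le_rpow (by positivity) htM (by positivity)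
    have h2 : M ^ (ν.re + 2 * (k : ℝ)) = M ^ ν.re * (M ^ 2) ^ k := by
      rw [Real.rpow_add hM0]
      congr 1
      rw [show (2 * (k : ℝ)) = ((2 * k : ℕ) : ℝ) by push_cast; ring,
        Real.rpow_natCast, pow_mul]
    rw [h2] at h1
    exact h1
  have habsC : ∀ k : ℕ, (k.factorial : ℝ) * G * k.factorial
      ≤ Complex.abs ((k.factorial : ℂ) * Complex.Gamma (ν + k + 1)) :=
    fun k => factorial_G_le ν hν k (factorial_le_Pprod ν hν k) (Gamma_factor ν hν k)
  have habsCpos : ∀ k : ℕ, 0 < (k.factorial : ℝ) * G * k.factorial := by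
    intro k
    have : (0 : ℝ) < k.factorial := by exact_mod_cast k.factorial_pos
    positivity
  have hCne : ∀ k : ℕ, ((k.factorial : ℂ) * Complex.Gamma (ν + k + 1)) ≠ 0 := by
    intro k h
    have := habsC k
    rw [h] at this
    simp at this
    nlinarith [habsCpos k, this]
  -- summability of the bound
  have hu : Summable u := by
    apply Summable.of_nonneg_of_le (fun k => by positivity)
      (fun k => ?_) (((Real.summable_pow_div_factorial (2 * M ^ 2)).mul_left
        ((Complex.abs ν + 2) * M ^ ν.re / ((z / 2) * G))))
    have h2k : (k : ℝ) ≤ 2 ^ k := by exact_mod_cast (Nat.lt_two_pow_self (n := k)).le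
    have hfk : (1 : ℝ) ≤ k.factorial := by exact_mod_cast k.factorial_pos
    have hrhs : (Complex.abs ν + 2) * M ^ ν.re / ((z / 2) * G) * ((2 * M ^ 2) ^ k / k.factorial)
        = ((Complex.abs ν + 2) * M ^ ν.re * (2 ^ k * (M ^ 2) ^ k)) /
          ((z / 2) * G * k.factorial) := by
      rw [mul_pow]
      field_simp
    rw [hrhs]
    apply div_le_div₀ (by positivity) ?_ (by positivity) ?_
    · have habs : (0:ℝ) ≤ Complex.abs ν := Complex.abs.nonneg _
      have h2 : (1:ℝ) ≤ 2 ^ k := one_le_pow₀ (by norm_num)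
      have hMn : (0:ℝ) ≤ M ^ ν.re * (M ^ 2) ^ k := by positivity
      have h1 : Complex.abs ν + 2 * k ≤ (Complex.abs ν + 2) * 2 ^ k := by nlinarith
      calc (Complex.abs ν + 2 * k) * M ^ ν.re * (M ^ 2) ^ k
          = (Complex.abs ν + 2 * k) * (M ^ ν.re * (M ^ 2) ^ k) := by ring
        _ ≤ ((Complex.abs ν + 2) * 2 ^ k) * (M ^ ν.re * (M ^ 2) ^ k) :=
            mul_le_mul_of_nonneg_right h1 hMn
        _ = (Complex.abs ν + 2) * M ^ ν.re * (2 ^ k * (M ^ 2) ^ k) := by ring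
    · have hA : (0:ℝ) ≤ z / 2 * G * k.factorial := by positivity
      calc z / 2 * G * (k.factorial:ℝ) ≤ z / 2 * G * k.factorial * k.factorial :=
            le_mul_of_one_le_right hA hfk
        _ = z / 2 * ((k.factorial:ℝ) * G * k.factorial) := by ring
  -- derivative of each term
  have hderiv : ∀ (k : ℕ) (t : ℝ), t ∈ Set.Ioo (z / 2) (z + 1) →
      HasDerivAt (g k) (g' k t) t := by
    intro k t ht
    have ht0 : 0 < t := lt_trans (by positivity) ht.1
    have htC : (t : ℂ) ≠ 0 := by exact_mod_cast ht0.ne'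
    have h0 : ((t : ℂ) / 2) ∈ Complex.slitPlane := by
      rw [Complex.mem_slitPlane_iff]
      left
      simp
      positivity
    have h0' : ((t : ℂ) / 2) ≠ 0 := by
      simpa using htC
    have h1 : HasDerivAt (fun u : ℂ => u / 2) (1 / 2 : ℂ) (t : ℂ) := by
      simpa using (hasDerivAt_id ((t : ℂ))).div_const 2
    have h2 : HasDerivAt (fun u : ℂ => (u / 2) ^ (ν + 2 * (k : ℂ)))
        ((ν + 2 * (k : ℂ)) * ((t : ℂ) / 2) ^ (ν + 2 * (k : ℂ) - 1) * (1 / 2)) (t : ℂ) :=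
      h1.cpow_const h0
    have h3 := (h2.div_const ((k.factorial : ℂ) * Complex.Gamma (ν + k + 1))).comp_ofReal
    convert h3 using 1
    simp only [hg'def]
    rw [Complex.cpow_sub _ _ h0', Complex.cpow_one]
    field_simp
  -- bound on the derivatives
  have hbound : ∀ (k : ℕ) (t : ℝ), t ∈ Set.Ioo (z / 2) (z + 1) → ‖g' k t‖ ≤ u k := by
    intro k t ht
    have ht0 : 0 < t := lt_trans (by positivity) ht.1
    have htM : t / 2 ≤ M := by
      have := ht.2
      have : t / 2 ≤ (z + 1) / 2 := by linarith
      exact le_trans this (le_max_left _ _)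
    have hnorm : ‖g' k t‖ = Complex.abs (ν + 2 * (k : ℂ)) *
        ((t / 2) ^ (ν.re + 2 * (k : ℝ))) /
        Complex.abs ((k.factorial : ℂ) * Complex.Gamma (ν + k + 1)) / t := by
      rw [hg'def]
      simp only [Complex.norm_eq_abs, map_div₀, map_mul]
      rw [habs_pow k t ht0]
      congr 1
      simp [Complex.abs_ofReal, abs_of_pos ht0]
    rw [hnorm, hudef]
    have habs2k : Complex.abs (ν + 2 * (k : ℂ)) ≤ Complex.abs ν + 2 * k := by
      calc Complex.abs (ν + 2 * (k : ℂ)) ≤ Complex.abs ν + Complex.abs (2 * (k : ℂ)) :=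
            Complex.abs.add_le _ _
        _ = Complex.abs ν + 2 * k := by
            rw [map_mul]
            simp [Complex.abs_natCast]
    calc Complex.abs (ν + 2 * (k : ℂ)) * (t / 2) ^ (ν.re + 2 * (k : ℝ)) /
          Complex.abs ((k.factorial : ℂ) * Complex.Gamma (ν + k + 1)) / t
        ≤ (Complex.abs ν + 2 * k) * (M ^ ν.re * (M ^ 2) ^ k) /
          ((k.factorial : ℝ) * G * k.factorial) / (z / 2) := by
          gcongr
          · exact hpow_le k t ht0 htM
          · exact habsC k
          · exact ht.1.le
      _ = (Complex.abs ν + 2 * k) * M ^ ν.re * (M ^ 2) ^ k /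
          ((z / 2) * ((k.factorial : ℝ) * G * k.factorial)) := by
          field_simp
  -- summability at the point z
  have hg0 : Summable (fun k => g k z) := by
    apply Summable.of_norm_bounded
      ((Real.summable_pow_div_factorial (M ^ 2)).mul_left (M ^ ν.re / G))
    intro k
    have hz2M : z / 2 ≤ M := by
      have : z / 2 ≤ (z + 1) / 2 := by linarith
      exact le_trans this (le_max_left _ _)
    have hnorm : ‖g k z‖ = (z / 2) ^ (ν.re + 2 * (k : ℝ)) /
        Complex.abs ((k.factorial : ℂ) * Complex.Gamma (ν + k + 1)) := by
      rw [hgdef]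
      simp only [Complex.norm_eq_abs, map_div₀]
      rw [habs_pow k z hz]
    rw [hnorm]
    have hfk : (1 : ℝ) ≤ k.factorial := by exact_mod_cast k.factorial_pos
    calc (z / 2) ^ (ν.re + 2 * (k : ℝ)) /
          Complex.abs ((k.factorial : ℂ) * Complex.Gamma (ν + k + 1))
        ≤ (M ^ ν.re * (M ^ 2) ^ k) / (G * k.factorial) := by
          apply div_le_div₀ (by positivity) (hpow_le k z hz hz2M) (by positivity)
          calc G * (k.factorial : ℝ) ≤ G * k.factorial * k.factorial :=
                le_mul_of_one_le_right (by positivity) hfk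
            _ = (k.factorial : ℝ) * G * k.factorial := by ring
            _ ≤ _ := habsC k
      _ = M ^ ν.re / G * ((M ^ 2) ^ k / k.factorial) := by
          field_simp
  have hzmem : z ∈ Set.Ioo (z / 2) (z + 1) := ⟨by linarith, by linarith⟩
  have key := hasDerivAt_tsum_of_isPreconnected hu isOpen_Ioo isPreconnected_Ioo
    hderiv hbound hzmem hg0 hzmem
  rw [besselI']
  have heq : (fun t : ℝ => besselI ν t) = fun y => ∑' k, g k y := rfl
  rw [heq]
  exact key.deriv
lemma geom_tail_one {x : ℝ} (h0 : 0 ≤ x) (h4 : x ≤ 1/4) : ∑' k : ℕ, x^(k+1) ≤ 2 * x := by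
  have hlt : x < 1 := lt_of_le_of_lt h4 (by norm_num)
  have h3 : (0:ℝ) < 1 - x := by linarith
  have h2 : (1 - x)⁻¹ ≤ 2 := by
    have := inv_anti₀ (by norm_num : (0:ℝ) < 1/2) (by linarith : 1/2 ≤ 1 - x)
    simpa using this
  calc ∑' k : ℕ, x^(k+1) = x * ∑' k : ℕ, x^k := by
        simp_rw [pow_succ']
        exact tsum_mul_left
    _ = x * (1 - x)⁻¹ := by rw [tsum_geometric_of_lt_one h0 hlt]
    _ ≤ x * 2 := mul_le_mul_of_nonneg_left h2 h0
    _ = 2 * x := by ring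

lemma geom_tail_two {x : ℝ} (h0 : 0 ≤ x) (h4 : x ≤ 1/4) : ∑' k : ℕ, x^(k+2) ≤ 2 * x^2 := by
  have hlt : x < 1 := lt_of_le_of_lt h4 (by norm_num)
  have h3 : (0:ℝ) < 1 - x := by linarith
  have h2 : (1 - x)⁻¹ ≤ 2 := by
    have := inv_anti₀ (by norm_num : (0:ℝ) < 1/2) (by linarith : 1/2 ≤ 1 - x)
    simpa using this
  calc ∑' k : ℕ, x^(k+2) = (∑' k : ℕ, x^k) * x^2 := by
        simp_rw [pow_add]
        exact tsum_mul_right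
    _ = (1 - x)⁻¹ * x^2 := by rw [tsum_geometric_of_lt_one h0 hlt]
    _ ≤ 2 * x^2 := mul_le_mul_of_nonneg_right h2 (by positivity)

lemma term_factor (z : ℝ) (hz : 0 < z) (ν : ℂ) (hν : 0 ≤ ν.re) (k : ℕ) :
    ((z:ℂ)/2)^(ν + 2*(k:ℂ)) / ((k.factorial:ℂ) * Complex.Gamma (ν+k+1))
      = (((z:ℂ)/2)^ν / Complex.Gamma (ν+1)) *
        (((z:ℂ)^2/4)^k / ((k.factorial:ℂ) * Pprod ν k)) := by
  have hzC : (z:ℂ) ≠ 0 := by exact_mod_cast hz.ne'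
  have hb : ((z:ℂ)/2) ≠ 0 := by
    simp [hzC]
  have h1 : ν + 2*(k:ℂ) = ν + ((2*k : ℕ):ℂ) := by push_cast; ring
  rw [h1, Complex.cpow_add _ _ hb, Complex.cpow_natCast, Gamma_factor ν hν k]
  have h2 : ((z:ℂ)/2)^(2*k) = ((z:ℂ)^2/4)^k := by
    rw [pow_mul]
    congr 1
    ring
  rw [h2, div_mul_div_comm]
  ring

set_option maxHeartbeats 1000000 in
lemma main_bound (z : ℝ) (hz : 0 < z) (ν : ℂ) (hν : 0 ≤ ν.re)
    (hR : max 1 (z^2) ≤ Complex.abs ν) :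
    ‖besselI' ν z / besselI ν z - (ν / z + z / (2 * ν))‖
      ≤ (4 * (z^2/4 + 4*(z^2/4)^2) / z) / (Complex.abs ν)^2 := by
  have hν1 : 1 ≤ Complex.abs ν := le_trans (le_max_left _ _) hR
  have hz2ν : z^2 ≤ Complex.abs ν := le_trans (le_max_right _ _) hR
  have hνpos : 0 < Complex.abs ν := lt_of_lt_of_le one_pos hν1
  have hν0 : ν ≠ 0 := by
    intro h
    rw [h] at hνpos
    simp at hνpos
  have hzC : (z:ℂ) ≠ 0 := by exact_mod_cast hz.ne'
  have hΓ : Complex.Gamma (ν+1) ≠ 0 := Gamma_ne_zero' ν hν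
  set w : ℂ := (z:ℂ)^2/4 with hw
  set c : ℕ → ℂ := fun k => w^k / ((k.factorial:ℂ) * Pprod ν k) with hc
  set A : ℂ := ((z:ℂ)/2)^ν / Complex.Gamma (ν+1) with hA
  set x : ℝ := z^2/(4*Complex.abs ν) with hx
  have hx0 : 0 ≤ x := by positivity
  have hx4 : x ≤ 1/4 := by
    rcases le_total (z^2) 1 with h | h
    · have : x ≤ z^2/4 := by
        rw [hx]
        apply div_le_div_of_nonneg_left (by positivity) (by norm_num)
        nlinarith
      nlinarith
    · rw [hx, div_le_iff₀ (by positivity)]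
      nlinarith
  have habsw : Complex.abs w = z^2/4 := by
    rw [hw, map_div₀, map_pow]
    simp [Complex.abs_ofReal, abs_of_pos hz]
  have hA0 : A ≠ 0 := by
    rw [hA]
    apply div_ne_zero _ hΓ
    rw [Complex.cpow_def_of_ne_zero (by simp [hzC])]
    exact Complex.exp_ne_zero _
  -- norm estimates for c
  have hc_norm : ∀ k, ‖c k‖ ≤ x^k / k.factorial := by
    intro k
    have hPk : (Complex.abs ν)^k ≤ Complex.abs (Pprod ν k) := abs_pow_le_Pprod ν hν k
    have hfk : (0:ℝ) < k.factorial := by exact_mod_cast k.factorial_pos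
    have h1 : ‖c k‖ = (z^2/4)^k / ((k.factorial:ℝ) * Complex.abs (Pprod ν k)) := by
      rw [hc]
      simp only [Complex.norm_eq_abs, map_div₀, map_mul, map_pow, habsw]
      congr 2
      simp [Complex.abs_natCast]
    rw [h1]
    have hxk : x^k = (z^2/4)^k / (Complex.abs ν)^k := by
      rw [hx, div_pow]
      rw [mul_pow]
      rw [div_pow, div_div]
    rw [hxk, div_div]
    have hmono : Complex.abs ν ^ k * (k.factorial:ℝ)
        ≤ (k.factorial:ℝ) * Complex.abs (Pprod ν k) := by
      calc Complex.abs ν ^ k * (k.factorial:ℝ)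
          = (k.factorial:ℝ) * Complex.abs ν ^ k := by ring
        _ ≤ _ := mul_le_mul_of_nonneg_left hPk hfk.le
    exact div_le_div₀ (by positivity) le_rfl (by positivity) hmono
  have hc_norm' : ∀ k, ‖c k‖ ≤ x^k := by
    intro k
    refine le_trans (hc_norm k) ?_
    have hfk : (1:ℝ) ≤ k.factorial := by exact_mod_cast k.factorial_pos
    exact div_le_self (by positivity) hfk
  have hkc_norm : ∀ k, ‖((k:ℕ):ℂ) * c k‖ ≤ x^k := by
    intro k
    have hkf : (k:ℝ) ≤ k.factorial := by exact_mod_cast Nat.self_le_factorial k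
    have hfk : (0:ℝ) < k.factorial := by exact_mod_cast k.factorial_pos
    rw [norm_mul]
    have h1 : ‖((k:ℕ):ℂ)‖ = (k:ℝ) := by simp
    rw [h1]
    calc (k:ℝ) * ‖c k‖ ≤ (k:ℝ) * (x^k / k.factorial) :=
          mul_le_mul_of_nonneg_left (hc_norm k) (Nat.cast_nonneg k)
      _ ≤ (k.factorial:ℝ) * (x^k / k.factorial) :=
          mul_le_mul_of_nonneg_right hkf (by positivity)
      _ = x^k := by field_simp
  have hxlt : x < 1 := lt_of_le_of_lt hx4 (by norm_num)
  have hsumx : Summable (fun k : ℕ => x^k) := summable_geometric_of_lt_one hx0 hxlt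
  have hsum_c : Summable c := by
    apply Summable.of_norm_bounded hsumx hc_norm'
  have hsum_kc : Summable (fun k => ((k:ℕ):ℂ) * c k) := by
    apply Summable.of_norm_bounded hsumx hkc_norm
  set S0 : ℂ := ∑' k, c k with hS0
  set S1 : ℂ := ∑' k, ((k:ℕ):ℂ) * c k with hS1
  -- factorizations
  have hIB : besselI ν z = A * S0 := by
    rw [besselI, hS0, tsum_congr (fun k => term_factor z hz ν hν k), tsum_mul_left]
  have hIB' : besselI' ν z = (A/z*ν) * S0 + (2*A/z) * S1 := by
    rw [besselI'_eq z hz ν hν]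
    have h1 : ∀ k : ℕ, (ν + 2*(k:ℂ)) * ((z:ℂ)/2)^(ν+2*(k:ℂ)) /
        ((k.factorial:ℂ) * Complex.Gamma (ν+k+1)) / (z:ℂ)
        = (A/z*ν) * c k + (2*A/z) * (((k:ℕ):ℂ) * c k) := by
      intro k
      have h2 : (ν + 2*(k:ℂ)) * ((z:ℂ)/2)^(ν+2*(k:ℂ)) /
          ((k.factorial:ℂ) * Complex.Gamma (ν+k+1)) / (z:ℂ)
          = (ν + 2*(k:ℂ)) * (((z:ℂ)/2)^(ν+2*(k:ℂ)) /
            ((k.factorial:ℂ) * Complex.Gamma (ν+k+1))) / (z:ℂ) := by ring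
      rw [h2, term_factor z hz ν hν k]
      ring
    rw [tsum_congr h1, Summable.tsum_add (hsum_c.mul_left _) (hsum_kc.mul_left _),
      tsum_mul_left, tsum_mul_left]
  -- decomposition of S0
  have hc0 : c 0 = 1 := by simp [hc, Pprod_zero]
  have hc1 : c 1 = w / (ν+1) := by simp [hc, Pprod_one]
  set r : ℂ := ∑' k, c (k+1) with hr
  have hsum_c1 : Summable (fun k => c (k+1)) := (summable_nat_add_iff 1).2 hsum_c
  have hS0eq : S0 = 1 + r := by
    have h3 := (hasSum_nat_add_iff (f := c) 1).1 hsum_c1.hasSum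
    have h4 := h3.tsum_eq
    rw [hS0, h4, Finset.sum_range_one, hc0]
    ring
  have hr_norm : ‖r‖ ≤ 2*x := by
    have hsx : Summable (fun k : ℕ => x^(k+1)) := (summable_nat_add_iff 1).2 hsumx
    exact le_trans (tsum_of_norm_bounded hsx.hasSum fun k => hc_norm' (k+1))
      (geom_tail_one hx0 hx4)
  have hS0norm : 1/2 ≤ ‖S0‖ := by
    rw [hS0eq]
    have key : ‖(1:ℂ)‖ ≤ ‖1 + r‖ + ‖r‖ := by
      have h2 := norm_add_le (1 + r) (-r)
      simpa using h2
    simp only [norm_one] at key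
    linarith
  have hS0ne : S0 ≠ 0 := by
    intro h
    rw [h] at hS0norm
    simp at hS0norm
    linarith
  -- decomposition of S1
  set T : ℂ := ∑' k, ((k+2:ℕ):ℂ) * c (k+2) with hT
  have hsum_kc2 : Summable (fun k : ℕ => ((k+2:ℕ):ℂ) * c (k+2)) :=
    (summable_nat_add_iff (f := fun k => ((k:ℕ):ℂ) * c k) 2).2 hsum_kc
  have hS1eq : S1 = c 1 + T := by
    have h3 := (hasSum_nat_add_iff (f := fun k => ((k:ℕ):ℂ) * c k) 2).1 hsum_kc2.hasSum
    have h4 := h3.tsum_eq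
    rw [hS1, h4, ← hT, Finset.sum_range_succ, Finset.sum_range_one]
    push_cast
    ring
  have hT_norm : ‖T‖ ≤ 2*x^2 := by
    have hsx : Summable (fun k : ℕ => x^(k+2)) :=
      (summable_nat_add_iff (f := fun k => x^k) 2).2 hsumx
    exact le_trans (tsum_of_norm_bounded hsx.hasSum fun k => hkc_norm (k+2))
      (geom_tail_two hx0 hx4)
  -- the difference D
  have hν1ne : ν + 1 ≠ 0 := by
    intro h
    have := congrArg Complex.re h
    simp at this
    nlinarith
  have hν1abs : Complex.abs ν ≤ Complex.abs (ν+1) := by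
    have := abs_le_abs_add ν hν 0
    simpa using this
  have hc1ν : c 1 - w/ν = -(w/(ν * (ν+1))) := by
    rw [hc1]
    field_simp
    ring
  have hterm1 : ‖c 1 - w/ν‖ ≤ (z^2/4) / (Complex.abs ν)^2 := by
    rw [hc1ν, norm_neg, norm_div, norm_mul]
    simp only [Complex.norm_eq_abs, habsw]
    calc z^2/4 / (Complex.abs ν * Complex.abs (ν+1))
        ≤ z^2/4 / (Complex.abs ν * Complex.abs ν) := by
          gcongr <;> exact hν1abs
      _ = z^2/4 / (Complex.abs ν)^2 := by ring_nf
  have hwνr : ‖w/ν * r‖ ≤ 2*(z^2/4)^2 / (Complex.abs ν)^2 := by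
    rw [norm_mul, norm_div]
    simp only [Complex.norm_eq_abs, habsw]
    calc z^2/4 / Complex.abs ν * ‖r‖ ≤ z^2/4 / Complex.abs ν * (2*x) := by
          apply mul_le_mul_of_nonneg_left hr_norm (by positivity)
      _ = 2*(z^2/4)^2 / (Complex.abs ν)^2 := by
          rw [hx]
          field_simp
  have hx2 : 2*x^2 = 2*(z^2/4)^2 / (Complex.abs ν)^2 := by
    rw [hx]
    field_simp
  have hDnorm : ‖S1 - w/ν * S0‖ ≤ (z^2/4 + 4*(z^2/4)^2) / (Complex.abs ν)^2 := by
    have hD : S1 - w/ν * S0 = (c 1 - w/ν) + T - w/ν * r := by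
      rw [hS1eq, hS0eq]
      ring
    rw [hD]
    calc ‖(c 1 - w/ν) + T - w/ν * r‖ ≤ ‖(c 1 - w/ν) + T‖ + ‖w/ν * r‖ := norm_sub_le _ _
      _ ≤ ‖c 1 - w/ν‖ + ‖T‖ + ‖w/ν * r‖ := by
          have := norm_add_le (c 1 - w/ν) T
          linarith
      _ ≤ (z^2/4) / (Complex.abs ν)^2 + 2*(z^2/4)^2 / (Complex.abs ν)^2
            + 2*(z^2/4)^2 / (Complex.abs ν)^2 := by
          have h5 : ‖T‖ ≤ 2*(z^2/4)^2 / (Complex.abs ν)^2 := by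
            rw [← hx2]
            exact hT_norm
          linarith [hterm1, hwνr]
      _ = (z^2/4 + 4*(z^2/4)^2) / (Complex.abs ν)^2 := by ring
  -- key identity
  have hkey : besselI' ν z / besselI ν z - (ν / z + z / (2 * ν))
      = 2 * (S1 - w/ν * S0) / ((z:ℂ) * S0) := by
    rw [hIB, hIB', hw]
    field_simp
    ring
  rw [hkey]
  have h2n : ‖(2:ℂ)‖ = 2 := by norm_num
  have hzn : ‖(z:ℂ)‖ = z := by
    rw [Complex.norm_real, Real.norm_eq_abs, abs_of_pos hz]
  have hnorm : ‖(2:ℂ) * (S1 - w/ν * S0) / ((z:ℂ) * S0)‖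
      = 2 * ‖S1 - w/ν * S0‖ / (z * ‖S0‖) := by
    rw [norm_div, norm_mul, norm_mul, h2n, hzn]
  rw [hnorm]
  calc 2 * ‖S1 - w/ν * S0‖ / (z * ‖S0‖)
      ≤ 2 * ((z^2/4 + 4*(z^2/4)^2) / (Complex.abs ν)^2) / (z * (1/2)) := by
        gcongr <;> first
          | exact hDnorm
          | exact hS0norm
    _ = (4 * (z^2/4 + 4*(z^2/4)^2) / z) / (Complex.abs ν)^2 := by
        have hzne : z ≠ 0 := hz.ne'
        have hNne : (Complex.abs ν) ≠ 0 := hνpos.ne'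
        field_simp
        ring

end BesselAsymp

open BesselAsymp in
/-- For fixed `z > 0`, as `|ν| → ∞` with `Re ν ≥ 0`,
`I'_ν(z)/I_ν(z) = ν/z + z/(2ν) + O(1/|ν|²)`. -/
theorem besselI_log_deriv_asymptotics (z : ℝ) (hz : 0 < z) :
    (fun ν : ℂ => besselI' ν z / besselI ν z - (ν / z + z / (2 * ν)))
      =O[Filter.comap (fun ν : ℂ => ‖ν‖) Filter.atTop ⊓ 𝓟 {ν : ℂ | 0 ≤ ν.re}]
      (fun ν => 1 / ν ^ 2) := by
  rw [isBigO_iff]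
  refine ⟨4 * (z^2/4 + 4*(z^2/4)^2) / z, ?_⟩
  rw [eventually_inf_principal]
  have hev : ∀ᶠ ν : ℂ in Filter.comap (fun ν : ℂ => ‖ν‖) Filter.atTop,
      max 1 (z^2) ≤ Complex.abs ν := by
    rw [eventually_comap]
    filter_upwards [eventually_ge_atTop (max 1 (z^2))] with b hb a ha
    rw [← Complex.norm_eq_abs, ha]
    exact hb
  filter_upwards [hev] with ν hν hre
  have h := main_bound z hz ν hre hν
  have hνpos : (0:ℝ) < Complex.abs ν :=
    lt_of_lt_of_le one_pos (le_trans (le_max_left _ _) hν)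
  have hn : ‖(1:ℂ)/ν^2‖ = 1/(Complex.abs ν)^2 := by
    rw [norm_div, norm_one, norm_pow]
    rfl
  calc ‖besselI' ν z / besselI ν z - (ν / z + z / (2 * ν))‖
      ≤ (4 * (z^2/4 + 4*(z^2/4)^2) / z) / (Complex.abs ν)^2 := h
    _ = (4 * (z^2/4 + 4*(z^2/4)^2) / z) * ‖(1:ℂ)/ν^2‖ := by
        rw [hn]
        ring
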